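/- Let 1 ≤ ℓ ≤ k be natural numbers and let d be a real number. Then ∑_{j=ℓ}^{k} (-1)^{j-ℓ} C(k,j) C(j-1,ℓ-1) d^j = ℓ·C(k,ℓ) · ∫_0^d x^{ℓ-1}(1-x)^{k-ℓ} dx. -/

import Mathlib

lemma nat_key (l i k : ℕ) (hl : 1 ≤ l) (h : l + i ≤ k) :
    (l + i) * (k.choose (l + i) * (l + i - 1).choose (l - 1)) =
      l * k.choose l * (k - l).choose i := by
  obtain ⟨m, rfl⟩ := Nat.exists_eq_add_of_le hl
  have h1 := Nat.add_one_mul_choose_eq (m + i) m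
  have h2 := Nat.choose_mul (n := k) (k := 1 + m + i) (s := 1 + m) (by omega)
  have e1 : 1 + m + i - 1 = m + i := by omega
  have e2 : 1 + m - 1 = m := by omega
  have e3 : 1 + m + i - (1 + m) = i := by omega
  have e4 : m + i + 1 = 1 + m + i := by omega
  have e5 : m + 1 = 1 + m := by omega
  rw [e1, e2]
  rw [e4, e5] at h1
  rw [e3] at h2
  calc (1 + m + i) * (k.choose (1 + m + i) * (m + i).choose m)
      = k.choose (1 + m + i) * ((1 + m + i) * (m + i).choose m) := by ring
    _ = k.choose (1 + m + i) * ((1 + m + i).choose (1 + m) * (1 + m)) := by rw [h1]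
    _ = (k.choose (1 + m + i) * (1 + m + i).choose (1 + m)) * (1 + m) := by ring
    _ = (k.choose (1 + m) * (k - (1 + m)).choose i) * (1 + m) := by rw [h2]
    _ = (1 + m) * k.choose (1 + m) * (k - (1 + m)).choose i := by ring

theorem stmt_9 (l k : ℕ) (hl : 1 ≤ l) (hk : l ≤ k) (d : ℝ) :
    ∑ j ∈ Finset.Icc l k,
        (-1 : ℝ) ^ (j - l) * (k.choose j : ℝ) * ((j - 1).choose (l - 1) : ℝ) * d ^ j
      = (l : ℝ) * (k.choose l : ℝ) * ∫ x in (0 : ℝ)..d, x ^ (l - 1) * (1 - x) ^ (k - l) := by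
  obtain ⟨n, rfl⟩ := Nat.exists_eq_add_of_le hk
  obtain ⟨m, rfl⟩ := Nat.exists_eq_add_of_le hl
  set l := 1 + m with hldef
  have hl1 : l - 1 = m := by omega
  have hkl : l + n - l = n := by omega
  rw [hl1, hkl]
  -- expand the integrand
  have expand : ∀ x : ℝ, x ^ m * (1 - x) ^ n =
      ∑ i ∈ Finset.range (n + 1), (-1 : ℝ) ^ i * (n.choose i : ℝ) * x ^ (m + i) := by
    intro x
    have : (1 - x) ^ n = ((-x) + 1) ^ n := by ring_nf
    rw [this, add_pow]
    rw [Finset.mul_sum]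
    refine Finset.sum_congr rfl fun i hi => ?_
    rw [neg_pow x i]
    ring
  have hint : (∫ x in (0 : ℝ)..d, x ^ m * (1 - x) ^ n) =
      ∑ i ∈ Finset.range (n + 1), (-1 : ℝ) ^ i * (n.choose i : ℝ) * d ^ (m + i + 1) / (m + i + 1) := by
    rw [intervalIntegral.integral_congr (g := fun x =>
        ∑ i ∈ Finset.range (n + 1), (-1 : ℝ) ^ i * (n.choose i : ℝ) * x ^ (m + i))
        (fun x _ => expand x)]
    rw [intervalIntegral.integral_finset_sum]
    · refine Finset.sum_congr rfl fun i hi => ?_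
      rw [intervalIntegral.integral_const_mul, integral_pow]
      rw [zero_pow (by omega)]
      push_cast
      ring
    · intro i hi
      exact (IntervalIntegrable.const_mul (intervalIntegral.intervalIntegrable_pow _) _)
  rw [hint, Finset.mul_sum]
  rw [← Finset.Ico_add_one_right_eq_Icc, Finset.sum_Ico_eq_sum_range]
  have hrange : l + n + 1 - l = n + 1 := by omega
  rw [hrange]
  refine Finset.sum_congr rfl fun i hi => ?_
  simp only [Finset.mem_range] at hi
  have key := nat_key l i (l + n) (by omega) (by omega)
  have e1 : l + i - l = i := by omega
  have e2 : m + i + 1 = l + i := by omega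
  rw [e1, e2]
  have hpos : ((l : ℝ) + i) ≠ 0 := by positivity
  rw [hkl, hl1] at key
  have keyR : ((l : ℝ) + i) * ((l + n).choose (l + i) * (l + i - 1).choose m) =
      l * (l + n).choose l * n.choose i := by
    exact_mod_cast congrArg (Nat.cast (R := ℝ)) key
  have hden : (m : ℝ) + i + 1 = (l : ℝ) + i := by
    simp only [hldef]; push_cast; ring
  rw [hden]
  field_simp
  linear_combination (d ^ (l + i)) * keyR
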